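/- Let k be a field of characteristic zero and let f_1,...,f_n ∈ k[[X_1,...,X_n]] generate a proper ideal I such that dim_k k[[X_1,...,X_n]]/(f_1,...,f_n) < +∞ as a k-vector space. Then J_X(f_1,...,f_n)·(X_1,...,X_n) ⊆ (f_1,...,f_n); in other words, the class of the Jacobian J_X(f_1,...,f_n) in the Artinian algebra k[[X_1,...,X_n]]/(f_1,...,f_n) is annihilated by the maximal ideal, i.e. it lies in the socle of that algebra. -/

import Mathlib

set_option synthInstance.maxHeartbeats 1000000
set_option maxHeartbeats 2000000

open TensorProduct MvPowerSeries



/-- Key abstract lemma: if `Δ ∈ A ⊗ A` satisfies `(y⊗1)Δ = (1⊗y)Δ` for all `y`,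
then the image of `Δ` under the multiplication map is annihilated by every nilpotent. -/
lemma trace_socle {k : Type} [Field k] {A : Type} [CommRing A] [Algebra k A]
    [FiniteDimensional k A] (Δ : A ⊗[k] A)
    (hΔ : ∀ y : A, (y ⊗ₜ[k] (1 : A)) * Δ = ((1 : A) ⊗ₜ[k] y) * Δ)
    {x : A} (hx : IsNilpotent x) :
    x * Algebra.TensorProduct.lmul' k (S := A) Δ = 0 := by
  rw [← Module.forall_dual_apply_eq_zero_iff k]
  intro ψ
  classical
  set μ : A ⊗[k] A →ₐ[k] A := Algebra.TensorProduct.lmul' k (S := A)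
  -- h a = ψ ∘ (mult by a)
  set h : A →ₗ[k] Module.Dual k A :=
    (LinearMap.llcomp k A A k ψ).comp (LinearMap.mul k A) with hh
  set G : A ⊗[k] A →ₗ[k] Module.End k A :=
    (dualTensorHom k A A).comp (TensorProduct.map h LinearMap.id) with hG
  have hGtmul : ∀ a b : A, G (a ⊗ₜ[k] b) = dualTensorHom k A A (h a ⊗ₜ[k] b) := by
    intro a b; simp [hG]
  have F1 : ∀ β : A ⊗[k] A, LinearMap.trace k A (G β) = ψ (μ β) := by
    intro β
    induction β using TensorProduct.induction_on with
    | zero => simp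
    | tmul a b =>
        rw [hGtmul, LinearMap.trace_eq_contract_apply, contractLeft_apply]
        simp [hh, μ, Algebra.TensorProduct.lmul'_apply_tmul]
    | add u v hu hv => simp [map_add, hu, hv]
  have F2 : ∀ β : A ⊗[k] A,
      G ((x ⊗ₜ[k] (1 : A)) * β) = (G β) ∘ₗ (Algebra.lmul k A x) := by
    intro β
    induction β using TensorProduct.induction_on with
    | zero => simp
    | tmul a b =>
        rw [Algebra.TensorProduct.tmul_mul_tmul, hGtmul, hGtmul]
        ext v
        simp [hh, dualTensorHom_apply]
        ring_nf
    | add u v hu hv =>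
        rw [mul_add, map_add, hu, hv, map_add, LinearMap.add_comp]
  have F3 : ∀ β : A ⊗[k] A,
      G (((1 : A) ⊗ₜ[k] x) * β) = (Algebra.lmul k A x) ∘ₗ (G β) := by
    intro β
    induction β using TensorProduct.induction_on with
    | zero => simp
    | tmul a b =>
        rw [Algebra.TensorProduct.tmul_mul_tmul, hGtmul, hGtmul]
        ext v
        simp [hh, dualTensorHom_apply, mul_smul_comm]
    | add u v hu hv =>
        rw [mul_add, map_add, hu, hv, map_add, LinearMap.comp_add]
  -- x * μ Δ = μ ((1⊗x) * Δ)
  have key : ψ (x * μ Δ) = LinearMap.trace k A ((Algebra.lmul k A x) ∘ₗ (G Δ)) := by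
    rw [← F3, F1]
    have : μ (((1 : A) ⊗ₜ[k] x) * Δ) = x * μ Δ := by
      rw [map_mul]
      simp [μ, Algebra.TensorProduct.lmul'_apply_tmul]
    rw [this]
  rw [key]
  -- the operator is nilpotent
  have hcomm : (G Δ) ∘ₗ (Algebra.lmul k A x) = (Algebra.lmul k A x) ∘ₗ (G Δ) := by
    rw [← F2, ← F3, hΔ x]
  obtain ⟨t, ht⟩ := hx
  have hnil : IsNilpotent ((Algebra.lmul k A x) ∘ₗ (G Δ) : Module.End k A) := by
    refine ⟨t, ?_⟩
    have hc : Commute (Algebra.lmul k A x : Module.End k A) (G Δ) := hcomm.symm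
    have : ((Algebra.lmul k A x : Module.End k A) * (G Δ)) ^ t
        = (Algebra.lmul k A x : Module.End k A) ^ t * (G Δ) ^ t := hc.mul_pow t
    rw [← Module.End.mul_eq_comp, this]
    have : (Algebra.lmul k A x : Module.End k A) ^ t = Algebra.lmul k A (x ^ t) := by
      rw [map_pow]
    rw [Module.End.mul_eq_comp, ← Module.End.mul_eq_comp, ← map_pow, ht, map_zero, zero_mul]
  have := LinearMap.isNilpotent_trace_of_isNilpotent hnil
  exact this.eq_zero



/-- If all coefficients of `r` of multidegree pointwise `< d` vanish, then `r` lies in the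
`d`-th power of the ideal generated by the variables. -/
lemma mem_pow_span_X {k : Type} [Field k] {n d : ℕ} (r : MvPowerSeries (Fin n) k)
    (h : ∀ m : Fin n →₀ ℕ, (∀ i, m i < d) → MvPowerSeries.coeff (R := k) m r = 0) :
    r ∈ (Ideal.span (Set.range (MvPowerSeries.X : Fin n → MvPowerSeries (Fin n) k))) ^ d := by
  classical
  set g : Fin n → MvPowerSeries (Fin n) k := fun i β =>
    if (∀ j, j < i → β j < d) then MvPowerSeries.coeff (R := k) (β + Finsupp.single i d) r else 0
    with hg
  have hr : r = ∑ i : Fin n, (MvPowerSeries.X i) ^ d * g i := by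
    apply MvPowerSeries.ext
    intro m
    rw [map_sum]
    have hterm : ∀ i : Fin n, MvPowerSeries.coeff (R := k) m ((MvPowerSeries.X i) ^ d * g i)
        = if (d ≤ m i ∧ ∀ j, j < i → m j < d) then MvPowerSeries.coeff (R := k) m r else 0 := by
      intro i
      rw [MvPowerSeries.X_pow_eq, MvPowerSeries.coeff_monomial_mul]
      by_cases hle : Finsupp.single i d ≤ m
      · rw [if_pos hle]
        have hdm : d ≤ m i := by simpa using (Finsupp.single_le_iff).mp hle
        have hco : ∀ j, (m - Finsupp.single i d) j < d ↔ (j = i ∧ m i - d < d) ∨ (j ≠ i ∧ m j < d) := by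
          intro j
          rw [Finsupp.tsub_apply, Finsupp.single_apply]
          by_cases hji : j = i
          · subst hji; simp
          · simp [hji, Ne.symm hji]
        have : MvPowerSeries.coeff (R := k) ((m - Finsupp.single i d) + Finsupp.single i d) r
            = MvPowerSeries.coeff (R := k) m r := by
          rw [tsub_add_cancel_of_le hle]
        rw [hg]
        simp only [MvPowerSeries.coeff_apply] at this ⊢
        change (1 : k) * (if _ then _ else _) = _
        by_cases hcond : ∀ j, j < i → (m - Finsupp.single i d) j < d
        · have hcond' : ∀ j, j < i → m j < d := by
            intro j hj
            have := (hco j).mp (hcond j hj)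
            rcases this with ⟨hji, _⟩ | ⟨_, hmj⟩
            · exact absurd hji (by rintro rfl; exact lt_irrefl _ hj)
            · exact hmj
          rw [if_pos hcond, if_pos ⟨hdm, hcond'⟩, one_mul, this]
        · have hcond' : ¬ (d ≤ m i ∧ ∀ j, j < i → m j < d) := by
            rintro ⟨_, hall⟩
            apply hcond
            intro j hj
            refine (hco j).mpr (Or.inr ⟨?_, hall j hj⟩)
            rintro rfl; exact lt_irrefl _ hj
          rw [if_neg hcond, if_neg hcond', one_mul]
      · rw [if_neg hle]
        have : ¬ d ≤ m i := fun hd => hle (Finsupp.single_le_iff.mpr hd)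
        rw [if_neg (fun hc => this hc.1)]
    simp only [hterm]
    by_cases hex : ∃ i : Fin n, d ≤ m i
    · set s := Finset.univ.filter (fun i : Fin n => d ≤ m i) with hs
      have hsne : s.Nonempty := by
        obtain ⟨i, hi⟩ := hex
        exact ⟨i, by simp [hs, hi]⟩
      set i₀ := s.min' hsne with hi₀
      have hi₀mem : d ≤ m i₀ := by
        have := Finset.min'_mem s hsne
        simpa [hs] using this
      have hmin : ∀ j, j < i₀ → m j < d := by
        intro j hj
        by_contra hnot
        push_neg at hnot
        have : i₀ ≤ j := Finset.min'_le s j (by simp [hs, hnot])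
        exact absurd hj (not_lt.mpr this)
      rw [Finset.sum_eq_single i₀]
      · rw [if_pos ⟨hi₀mem, hmin⟩]
      · intro i _ hne
        rw [if_neg]
        rintro ⟨hdi, hall⟩
        have : i₀ ≤ i := Finset.min'_le s i (by simp [hs, hdi])
        have hlt : i₀ < i := lt_of_le_of_ne this (Ne.symm hne)
        exact absurd hi₀mem (not_le.mpr (hall i₀ hlt))
      · intro hmem; exact absurd (Finset.mem_univ i₀) hmem
    · push_neg at hex
      rw [h m hex]
      symm
      apply Finset.sum_eq_zero
      intro i _
      rw [if_neg (fun hc => absurd hc.1 (not_le.mpr (hex i)))]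
  rw [hr]
  apply Ideal.sum_mem
  intro i _
  exact Ideal.mul_mem_right _ _
    (Ideal.pow_mem_pow (Ideal.subset_span (Set.mem_range_self i)) d)


/-- Telescoping identity: the Bezoutian rows pair with `x j - y j` to give the
difference of monomials. -/
lemma bez_telescope {B : Type} [CommRing B] (x y : ℕ → B) (α : ℕ → ℕ) (n : ℕ) :
    ∑ j ∈ Finset.range n,
      ((∏ m ∈ Finset.range j, x m ^ α m) * (∏ m ∈ Finset.Ico (j + 1) n, y m ^ α m) *
        ∑ s ∈ Finset.range (α j), x j ^ s * y j ^ (α j - 1 - s)) * (x j - y j)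
    = ∏ m ∈ Finset.range n, x m ^ α m - ∏ m ∈ Finset.range n, y m ^ α m := by
  induction n with
  | zero => simp
  | succ n ih =>
    rw [Finset.sum_range_succ]
    have hstep : ∀ j ∈ Finset.range n,
        ((∏ m ∈ Finset.range j, x m ^ α m) * (∏ m ∈ Finset.Ico (j + 1) (n + 1), y m ^ α m) *
          ∑ s ∈ Finset.range (α j), x j ^ s * y j ^ (α j - 1 - s)) * (x j - y j)
        = y n ^ α n * (((∏ m ∈ Finset.range j, x m ^ α m) *
            (∏ m ∈ Finset.Ico (j + 1) n, y m ^ α m) *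
          ∑ s ∈ Finset.range (α j), x j ^ s * y j ^ (α j - 1 - s)) * (x j - y j)) := by
      intro j hj
      have hj' : j + 1 ≤ n := Finset.mem_range.mp hj
      rw [Finset.prod_Ico_succ_top hj']
      ring
    rw [Finset.sum_congr rfl hstep, ← Finset.mul_sum, ih]
    have hempty : Finset.Ico (n + 1) (n + 1) = ∅ := Finset.Ico_self _
    rw [hempty, Finset.prod_empty, mul_one]
    have hgeom : (∑ s ∈ Finset.range (α n), x n ^ s * y n ^ (α n - 1 - s)) * (x n - y n)
        = x n ^ α n - y n ^ α n := geom_sum₂_mul _ _ _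
    rw [Finset.prod_range_succ, Finset.prod_range_succ]
    linear_combination (∏ m ∈ Finset.range n, x m ^ α m) * hgeom

/-- Diagonal evaluation of a Bezoutian entry. -/
lemma bez_diag {B : Type} [CommRing B] (x : ℕ → B) (α : ℕ → ℕ) (n j : ℕ) (hj : j < n) :
    (∏ m ∈ Finset.range j, x m ^ α m) * (∏ m ∈ Finset.Ico (j + 1) n, x m ^ α m) *
      ∑ s ∈ Finset.range (α j), x j ^ s * x j ^ (α j - 1 - s)
    = (α j) • ∏ m ∈ Finset.range n, x m ^ (if m = j then α m - 1 else α m) := by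
  have hgeom : (∑ s ∈ Finset.range (α j), x j ^ s * x j ^ (α j - 1 - s))
      = (α j) • x j ^ (α j - 1) := by
    rw [Finset.sum_congr rfl (fun s hs => ?_), Finset.sum_const, Finset.card_range]
    rw [← pow_add]
    congr 1
    have := Finset.mem_range.mp hs
    omega
  rw [hgeom, mul_smul_comm]
  congr 1
  have hsplit : ∏ m ∈ Finset.range n, x m ^ (if m = j then α m - 1 else α m)
      = (∏ m ∈ Finset.range (j + 1), x m ^ (if m = j then α m - 1 else α m)) *
        ∏ m ∈ Finset.Ico (j + 1) n, x m ^ (if m = j then α m - 1 else α m) :=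
    (Finset.prod_range_mul_prod_Ico _ hj).symm
  rw [hsplit, Finset.prod_range_succ, if_pos rfl]
  have h1 : ∏ m ∈ Finset.range j, x m ^ (if m = j then α m - 1 else α m)
      = ∏ m ∈ Finset.range j, x m ^ α m := by
    apply Finset.prod_congr rfl
    intro m hm
    rw [if_neg (by have := Finset.mem_range.mp hm; omega)]
  have h2 : ∏ m ∈ Finset.Ico (j + 1) n, x m ^ (if m = j then α m - 1 else α m)
      = ∏ m ∈ Finset.Ico (j + 1) n, x m ^ α m := by
    apply Finset.prod_congr rfl
    intro m hm
    rw [if_neg (by have := (Finset.mem_Ico.mp hm).1; omega)]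
  rw [h1, h2]
  ring


lemma span_X_pow_le_ker {k : Type} [Field k] {n : ℕ}
    (f : Fin n → MvPowerSeries (Fin n) k)
    (hI : Ideal.span (Set.range f) ≠ ⊤)
    (hfin : FiniteDimensional k (MvPowerSeries (Fin n) k ⧸ Ideal.span (Set.range f))) :
    ∃ N : ℕ, 1 ≤ N ∧
      ∀ r ∈ (Ideal.span (Set.range (MvPowerSeries.X : Fin n → MvPowerSeries (Fin n) k))) ^ N,
        Ideal.Quotient.mk (Ideal.span (Set.range f)) r = 0 := by
  haveI : Nontrivial (MvPowerSeries (Fin n) k ⧸ Ideal.span (Set.range f)) :=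
    Ideal.Quotient.nontrivial_iff.mpr hI
  haveI : IsLocalRing (MvPowerSeries (Fin n) k ⧸ Ideal.span (Set.range f)) :=
    IsLocalRing.of_surjective' (Ideal.Quotient.mk (Ideal.span (Set.range f)))
      Ideal.Quotient.mk_surjective
  haveI : IsArtinian k (MvPowerSeries (Fin n) k ⧸ Ideal.span (Set.range f)) := inferInstance
  haveI : IsArtinianRing (MvPowerSeries (Fin n) k ⧸ Ideal.span (Set.range f)) :=
    isArtinian_of_tower k inferInstance
  set q := Ideal.Quotient.mk (Ideal.span (Set.range f)) with hq
  have hXmem : ∀ l : Fin n, q (MvPowerSeries.X l) ∈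
      IsLocalRing.maximalIdeal (MvPowerSeries (Fin n) k ⧸ Ideal.span (Set.range f)) := by
    intro l
    rw [IsLocalRing.mem_maximalIdeal, mem_nonunits_iff]
    intro hu
    obtain ⟨u, hu'⟩ := hu
    obtain ⟨s, hs⟩ := Ideal.Quotient.mk_surjective (↑u⁻¹ :
      MvPowerSeries (Fin n) k ⧸ Ideal.span (Set.range f))
    have hs' : q s = ↑u⁻¹ := hs
    have h1 : q (MvPowerSeries.X l * s) = 1 := by
      rw [map_mul, hs', ← hu', Units.mul_inv]
    have h2 : (1 : MvPowerSeries (Fin n) k) - MvPowerSeries.X l * s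
        ∈ Ideal.span (Set.range f) := by
      rw [← Ideal.Quotient.eq_zero_iff_mem, map_sub, h1, map_one, sub_self]
    have h3 : IsUnit ((1 : MvPowerSeries (Fin n) k) - MvPowerSeries.X l * s) := by
      rw [MvPowerSeries.isUnit_iff_constantCoeff]
      simp [map_sub, map_mul, MvPowerSeries.constantCoeff_X]
    exact hI (Ideal.eq_top_of_isUnit_mem _ h2 h3)
  obtain ⟨t, ht⟩ := IsArtinianRing.isNilpotent_jacobson_bot
    (R := MvPowerSeries (Fin n) k ⧸ Ideal.span (Set.range f))
  refine ⟨t + 1, by omega, ?_⟩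
  intro r hr
  have hr' : r ∈ (Ideal.span (Set.range (MvPowerSeries.X :
      Fin n → MvPowerSeries (Fin n) k))) ^ t :=
    Ideal.pow_le_pow_right (by omega) hr
  have hmap : q r ∈ (Ideal.map q (Ideal.span (Set.range (MvPowerSeries.X :
      Fin n → MvPowerSeries (Fin n) k)))) ^ t := by
    rw [← Ideal.map_pow]
    exact Ideal.mem_map_of_mem q hr'
  have hle : Ideal.map q (Ideal.span (Set.range (MvPowerSeries.X :
      Fin n → MvPowerSeries (Fin n) k)))
      ≤ IsLocalRing.maximalIdeal (MvPowerSeries (Fin n) k ⧸ Ideal.span (Set.range f)) := by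
    rw [Ideal.map_span, Ideal.span_le]
    rintro x ⟨y, ⟨l, rfl⟩, rfl⟩
    exact hXmem l
  have hfin2 : q r ∈ (IsLocalRing.maximalIdeal (MvPowerSeries (Fin n) k ⧸
      Ideal.span (Set.range f))) ^ t := Ideal.pow_right_mono hle t hmap
  rw [← IsLocalRing.jacobson_eq_maximalIdeal (⊥ : Ideal (MvPowerSeries (Fin n) k ⧸
      Ideal.span (Set.range f))) bot_ne_top, ht] at hfin2
  simpa using hfin2



/-- The formal partial derivative `∂f/∂X_j` of a multivariate formal power series. -/
noncomputable def psDeriv {A : Type*} [CommRing A] {n : ℕ} (j : Fin n)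
    (f : MvPowerSeries (Fin n) A) : MvPowerSeries (Fin n) A :=
  fun m => (m j + 1 : ℕ) * MvPowerSeries.coeff (R := A) (m + Finsupp.single j 1) f

/-- The Jacobian `J_X(f) = det (∂f_i/∂X_j)` of `n` formal power series in `n` variables. -/
noncomputable def jacobianPS {A : Type*} [CommRing A] {n : ℕ}
    (f : Fin n → MvPowerSeries (Fin n) A) : MvPowerSeries (Fin n) A :=
  Matrix.det (Matrix.of fun i j => psDeriv j (f i))

section Assembly

variable {k : Type} [Field k] {n : ℕ}

-- a monomial is the product of powers of the variables
lemma monomial_eq_prod (α : Fin n →₀ ℕ) :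
    (MvPowerSeries.monomial (R := k) α (1 : k)) = ∏ i : Fin n, (MvPowerSeries.X i) ^ (α i) := by
  classical
  have h1 : (MvPolynomial.monomial α (1 : k) : MvPowerSeries (Fin n) k)
      = MvPowerSeries.monomial (R := k) α (1 : k) := MvPolynomial.coe_monomial α 1
  rw [← h1, ← MvPolynomial.prod_X_pow_eq_monomial, ← MvPolynomial.coeToMvPowerSeries.ringHom_apply,
    map_prod]
  have h2 : ∏ i : Fin n, (MvPowerSeries.X i : MvPowerSeries (Fin n) k) ^ α i
      = ∏ i ∈ α.support, (MvPowerSeries.X i) ^ α i :=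
    (Finset.prod_subset (Finset.subset_univ _) (fun i _ hi => by
      rw [Finsupp.notMem_support_iff.mp hi, pow_zero])).symm
  rw [h2]
  apply Finset.prod_congr rfl
  intro i _
  rw [map_pow, MvPolynomial.coeToMvPowerSeries.ringHom_apply, MvPolynomial.coe_X]

theorem core {k : Type} [Field k] {n : ℕ} {A : Type} [CommRing A] [Algebra k A]
    [FiniteDimensional k A]
    (qa : MvPowerSeries (Fin n) k →ₐ[k] A)
    (hsurj : Function.Surjective qa)
    (f : Fin n → MvPowerSeries (Fin n) k) (N : ℕ) (hN1 : 1 ≤ N)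
    (hker : ∀ r ∈ (Ideal.span (Set.range
        (MvPowerSeries.X : Fin n → MvPowerSeries (Fin n) k))) ^ N, qa r = 0)
    (hf0 : ∀ i, qa (f i) = 0)
    (g : MvPowerSeries (Fin n) k)
    (hg : g ∈ Ideal.span (Set.range (MvPowerSeries.X : Fin n → MvPowerSeries (Fin n) k))) :
    qa (jacobianPS f * g) = 0 := by
  classical
  set Q1 : MvPowerSeries (Fin n) k →ₐ[k] A ⊗[k] A :=
    (Algebra.TensorProduct.includeLeft).comp qa with hQ1
  set Q2 : MvPowerSeries (Fin n) k →ₐ[k] A ⊗[k] A :=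
    (Algebra.TensorProduct.includeRight).comp qa with hQ2
  set μ : A ⊗[k] A →ₐ[k] A := Algebra.TensorProduct.lmul' k with hμ
  have hμQ1 : ∀ r, μ (Q1 r) = qa r := by
    intro r
    simp [hμ, hQ1, Algebra.TensorProduct.lmul'_apply_tmul]
  have hμQ2 : ∀ r, μ (Q2 r) = qa r := by
    intro r
    simp [hμ, hQ2, Algebra.TensorProduct.lmul'_apply_tmul]
  set d : ℕ := 2 * N with hd
  have hd2 : 2 ≤ d := by omega
  set bound : Fin n →₀ ℕ := Finsupp.equivFunOnFinite.symm (fun _ => d - 1) with hbound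
  set D : Finset (Fin n →₀ ℕ) := Finset.Iic bound with hD
  have hmemD : ∀ m : Fin n →₀ ℕ, (∀ i, m i < d) → m ∈ D := by
    intro m hm
    rw [hD, Finset.mem_Iic, Finsupp.le_def]
    intro i
    have := hm i
    simp only [hbound, Finsupp.coe_equivFunOnFinite_symm]
    omega
  have hDlt : ∀ α ∈ D, ∀ i, α i ≤ d - 1 := by
    intro α hα i
    rw [hD, Finset.mem_Iic, Finsupp.le_def] at hα
    simpa [hbound] using hα i
  -- ℕ-indexed variables
  set xx : ℕ → A ⊗[k] A :=
    fun m => if h : m < n then Q1 (MvPowerSeries.X ⟨m, h⟩) else 1 with hxx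
  set yy : ℕ → A ⊗[k] A :=
    fun m => if h : m < n then Q2 (MvPowerSeries.X ⟨m, h⟩) else 1 with hyy
  set zz : ℕ → (A) :=
    fun m => if h : m < n then qa (MvPowerSeries.X ⟨m, h⟩) else 1 with hzz
  set aa : (Fin n →₀ ℕ) → ℕ → ℕ := fun α m => if h : m < n then α ⟨m, h⟩ else 0 with haa
  set bez : Fin n → (Fin n →₀ ℕ) →
      A ⊗[k] A := fun j α =>
    (∏ m ∈ Finset.range j.1, xx m ^ aa α m) * (∏ m ∈ Finset.Ico (j.1 + 1) n, yy m ^ aa α m) *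
      ∑ s ∈ Finset.range (aa α j.1), xx j.1 ^ s * yy j.1 ^ (aa α j.1 - 1 - s) with hbez
  set M : Matrix (Fin n) (Fin n)
      (A ⊗[k] A) :=
    Matrix.of (fun i j => ∑ α ∈ D, MvPowerSeries.coeff (R := k) α (f i) • bez j α) with hM
  set v : Fin n → A ⊗[k] A :=
    fun j => Q1 (MvPowerSeries.X j) - Q2 (MvPowerSeries.X j) with hv
  -- products over ranges vs monomials
  have hprodQ : ∀ (g : MvPowerSeries (Fin n) k →ₐ[k] (A)
        ⊗[k] (A)) (gg : ℕ → _)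
      (hgg : ∀ m : ℕ, gg m = if h : m < n then g (MvPowerSeries.X ⟨m, h⟩) else 1)
      (α : Fin n →₀ ℕ),
      ∏ m ∈ Finset.range n, gg m ^ aa α m = g (MvPowerSeries.monomial (R := k) α 1) := by
    intro g gg hgg α
    rw [monomial_eq_prod, map_prod, ← Fin.prod_univ_eq_prod_range (fun m => gg m ^ aa α m) n]
    apply Finset.prod_congr rfl
    intro i _
    rw [hgg, map_pow]
    have hi : (i : ℕ) < n := i.2
    rw [dif_pos hi]
    simp [haa, hi]
  -- telescoping: rows of the Bezoutian pair with v
  have htele : ∀ (α : Fin n →₀ ℕ),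
      ∑ j : Fin n, bez j α * v j
        = Q1 (MvPowerSeries.monomial (R := k) α 1) - Q2 (MvPowerSeries.monomial (R := k) α 1) := by
    intro α
    have key := bez_telescope xx yy (aa α) n
    have hsum : ∑ j : Fin n, bez j α * v j
        = ∑ j ∈ Finset.range n,
          ((∏ m ∈ Finset.range j, xx m ^ aa α m) * (∏ m ∈ Finset.Ico (j + 1) n, yy m ^ aa α m) *
            ∑ s ∈ Finset.range (aa α j), xx j ^ s * yy j ^ (aa α j - 1 - s)) * (xx j - yy j) := by
      rw [← Fin.sum_univ_eq_sum_range (fun j =>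
        ((∏ m ∈ Finset.range j, xx m ^ aa α m) * (∏ m ∈ Finset.Ico (j + 1) n, yy m ^ aa α m) *
          ∑ s ∈ Finset.range (aa α j), xx j ^ s * yy j ^ (aa α j - 1 - s)) * (xx j - yy j)) n]
      apply Finset.sum_congr rfl
      intro j _
      have hj : (j : ℕ) < n := j.2
      rw [hbez, hv]
      congr 1
      rw [hxx, hyy]
      simp [hj]
    rw [hsum, key, hprodQ Q1 xx (fun m => rfl) α, hprodQ Q2 yy (fun m => rfl) α]
  -- truncation: every element of the quotient is the class of its truncation
  have htrunc : ∀ r : MvPowerSeries (Fin n) k,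
      qa r = qa (∑ α ∈ D, MvPowerSeries.coeff (R := k) α r • MvPowerSeries.monomial (R := k) α 1) := by
    intro r
    have hco : ∀ m : Fin n →₀ ℕ, (∀ i, m i < d) →
        MvPowerSeries.coeff (R := k) m
          (r - ∑ α ∈ D, MvPowerSeries.coeff (R := k) α r • MvPowerSeries.monomial (R := k) α 1) = 0 := by
      intro m hm
      rw [map_sub, map_sum]
      have : ∀ α ∈ D, MvPowerSeries.coeff (R := k) m
          (MvPowerSeries.coeff (R := k) α r • MvPowerSeries.monomial (R := k) α 1)
          = if α = m then MvPowerSeries.coeff (R := k) α r else 0 := by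
        intro α _
        rw [map_smul, MvPowerSeries.coeff_monomial]
        by_cases h : m = α
        · subst h; simp
        · simp [h, Ne.symm h]
      rw [Finset.sum_congr rfl this, Finset.sum_ite_eq' D m (fun α => MvPowerSeries.coeff (R := k) α r),
        if_pos (hmemD m hm), sub_self]
    have hmem := mem_pow_span_X _ hco
    have hmem2 : (r - ∑ α ∈ D, MvPowerSeries.coeff (R := k) α r • MvPowerSeries.monomial (R := k) α 1)
        ∈ (Ideal.span (Set.range (MvPowerSeries.X : Fin n → MvPowerSeries (Fin n) k))) ^ N :=
      Ideal.pow_le_pow_right (by omega) hmem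
    have h0 : qa (r - ∑ α ∈ D, MvPowerSeries.coeff (R := k) α r • MvPowerSeries.monomial (R := k) α 1) = 0 :=
      hker _ hmem2
    rw [map_sub, sub_eq_zero] at h0
    exact h0
  -- the matrix pairs with v to zero
  set P : Fin n → MvPowerSeries (Fin n) k := fun i =>
    ∑ α ∈ D, MvPowerSeries.coeff (R := k) α (f i) • MvPowerSeries.monomial (R := k) α 1 with hP
  have hPzero : ∀ i, qa (P i) = 0 := by
    intro i
    rw [hP, ← htrunc (f i)]
    exact hf0 i
  have hMv : M.mulVec v = 0 := by
    funext i
    show dotProduct (fun j => M i j) v = 0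
    rw [dotProduct]
    have step1 : ∀ j : Fin n, M i j * v j
        = ∑ α ∈ D, MvPowerSeries.coeff (R := k) α (f i) • (bez j α * v j) := by
      intro j
      rw [hM, Matrix.of_apply, Finset.sum_mul]
      exact Finset.sum_congr rfl fun α _ => smul_mul_assoc _ _ _
    rw [Finset.sum_congr rfl (fun j _ => step1 j), Finset.sum_comm]
    have step2 : ∀ α ∈ D, ∑ j : Fin n, MvPowerSeries.coeff (R := k) α (f i) • (bez j α * v j)
        = MvPowerSeries.coeff (R := k) α (f i) •
          (Q1 (MvPowerSeries.monomial (R := k) α 1) - Q2 (MvPowerSeries.monomial (R := k) α 1)) := by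
      intro α _
      rw [← Finset.smul_sum, htele α]
    rw [Finset.sum_congr rfl step2]
    have step3 : ∑ α ∈ D, MvPowerSeries.coeff (R := k) α (f i) •
        (Q1 (MvPowerSeries.monomial (R := k) α 1) - Q2 (MvPowerSeries.monomial (R := k) α 1))
        = Q1 (P i) - Q2 (P i) := by
      rw [hP, map_sum, map_sum, ← Finset.sum_sub_distrib]
      apply Finset.sum_congr rfl
      intro α _
      rw [map_smul, map_smul, smul_sub]
    rw [step3]
    have z1 : Q1 (P i) = 0 := by rw [hQ1, AlgHom.comp_apply, hPzero i, map_zero]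
    have z2 : Q2 (P i) = 0 := by rw [hQ2, AlgHom.comp_apply, hPzero i, map_zero]
    rw [z1, z2, sub_zero]
  set Δ := M.det with hΔdef
  have hdet : ∀ l : Fin n,
      (qa (MvPowerSeries.X l) ⊗ₜ[k] (1 : A)) * Δ
      = ((1 : A) ⊗ₜ[k] qa (MvPowerSeries.X l)) * Δ := by
    have h0 : Δ • v = 0 := by
      have h1 : (M.adjugate).mulVec (M.mulVec v) = 0 := by
        rw [hMv]; exact Matrix.mulVec_zero _
      rwa [Matrix.mulVec_mulVec, Matrix.adjugate_mul, Matrix.smul_mulVec,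
        Matrix.one_mulVec] at h1
    intro l
    have h2 : Δ * v l = 0 := by
      have := congrFun h0 l
      simpa [smul_eq_mul] using this
    have e1 : Q1 (MvPowerSeries.X l)
        = qa (MvPowerSeries.X l) ⊗ₜ[k] (1 : A) := by
      rw [hQ1, AlgHom.comp_apply]; rfl
    have e2 : Q2 (MvPowerSeries.X l)
        = (1 : A) ⊗ₜ[k] qa (MvPowerSeries.X l) := by
      rw [hQ2, AlgHom.comp_apply]; rfl
    simp only [hv] at h2
    rw [e1, e2, mul_sub] at h2
    have h3 := sub_eq_zero.mp h2
    rw [mul_comm _ Δ, mul_comm _ Δ]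
    exact h3
  -- closure: the commutation property holds for the whole quotient
  set Zs : Subalgebra k A :=
    { carrier := {y | (y ⊗ₜ[k] (1 : A)) * Δ
        = ((1 : A) ⊗ₜ[k] y) * Δ},
      mul_mem' := by
        intro a b ha hb
        simp only [Set.mem_setOf_eq] at ha hb ⊢
        calc (a * b) ⊗ₜ[k] (1 : A) * Δ
            = (a ⊗ₜ[k] (1 : A)) *
              ((b ⊗ₜ[k] (1 : A)) * Δ) := by
              rw [← mul_assoc, Algebra.TensorProduct.tmul_mul_tmul, mul_one]
          _ = (a ⊗ₜ[k] (1 : A)) *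
              (((1 : A) ⊗ₜ[k] b) * Δ) := by rw [hb]
          _ = ((1 : A) ⊗ₜ[k] b) *
              ((a ⊗ₜ[k] (1 : A)) * Δ) := by ring
          _ = ((1 : A) ⊗ₜ[k] b) *
              (((1 : A) ⊗ₜ[k] a) * Δ) := by rw [ha]
          _ = ((1 : A) ⊗ₜ[k] (a * b)) * Δ := by
              rw [← mul_assoc, Algebra.TensorProduct.tmul_mul_tmul, mul_one, mul_comm b a]
      one_mem' := by simp only [Set.mem_setOf_eq]
      add_mem' := by
        intro a b ha hb
        simp only [Set.mem_setOf_eq] at ha hb ⊢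
        rw [TensorProduct.add_tmul, TensorProduct.tmul_add, add_mul, add_mul, ha, hb]
      zero_mem' := by
        simp only [Set.mem_setOf_eq, TensorProduct.zero_tmul, TensorProduct.tmul_zero]
      algebraMap_mem' := by
        intro r
        simp only [Set.mem_setOf_eq]
        rw [Algebra.algebraMap_eq_smul_one,
          show ((r • (1 : A)) ⊗ₜ[k] (1 : A))
            = (1 : A) ⊗ₜ[k] (r • (1 : A))
            from TensorProduct.smul_tmul r 1 1] } with hZs
  have hZmem : ∀ y, y ∈ Zs ↔ ((y ⊗ₜ[k] (1 : A)) * Δ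
      = ((1 : A) ⊗ₜ[k] y) * Δ) := fun y => Iff.rfl
  have hXZ : ∀ l, qa (MvPowerSeries.X l) ∈ Zs := fun l => (hZmem _).mpr (hdet l)
  have hmonoZ : ∀ α : Fin n →₀ ℕ, qa (MvPowerSeries.monomial (R := k) α 1) ∈ Zs := by
    intro α
    have : qa (MvPowerSeries.monomial (R := k) α 1) = ∏ i : Fin n, qa (MvPowerSeries.X i) ^ α i := by
      rw [monomial_eq_prod, map_prod]
      exact Finset.prod_congr rfl fun i _ => map_pow qa _ _
    rw [this]
    exact Subalgebra.prod_mem _ fun i _ => Subalgebra.pow_mem _ (hXZ i) _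
  have hZ : ∀ y : A,
      (y ⊗ₜ[k] (1 : A)) * Δ
      = ((1 : A) ⊗ₜ[k] y) * Δ := by
    intro y
    rw [← hZmem]
    obtain ⟨r, rfl⟩ : ∃ r, qa r = y := hsurj y
    rw [htrunc r, map_sum]
    apply Subalgebra.sum_mem
    intro α _
    rw [map_smul]
    exact Subalgebra.smul_mem _ (hmonoZ α) _
  -- diagonal: μ of the matrix is the Jacobian matrix
  have hμbez : ∀ (j : Fin n) (α : Fin n →₀ ℕ),
      μ (bez j α) = (α j) • qa (MvPowerSeries.monomial (R := k) (α - Finsupp.single j 1) 1) := by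
    intro j α
    have hμxx : ∀ m, μ (xx m) = zz m := by
      intro m; rw [hxx, hzz]
      by_cases h : m < n
      · simp only [dif_pos h]; exact hμQ1 _
      · simp only [dif_neg h]; exact map_one μ
    have hμyy : ∀ m, μ (yy m) = zz m := by
      intro m; rw [hyy, hzz]
      by_cases h : m < n
      · simp only [dif_pos h]; exact hμQ2 _
      · simp only [dif_neg h]; exact map_one μ
    rw [hbez, map_mul, map_mul, map_prod, map_prod, map_sum]
    simp only [map_pow, map_mul, hμxx, hμyy]
    rw [bez_diag zz (aa α) n j.1 j.2]
    have hprodz : ∏ m ∈ Finset.range n, zz m ^ (if m = j.1 then aa α m - 1 else aa α m)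
        = qa (MvPowerSeries.monomial (R := k) (α - Finsupp.single j 1) 1) := by
      rw [monomial_eq_prod, map_prod,
        ← Fin.prod_univ_eq_prod_range (fun m => zz m ^ (if m = j.1 then aa α m - 1 else aa α m)) n]
      apply Finset.prod_congr rfl
      intro i _
      have hi : (i : ℕ) < n := i.2
      rw [hzz]
      simp only [dif_pos hi, Fin.eta]
      rw [map_pow]
      congr 1
      rw [haa]
      simp only [dif_pos hi, Fin.eta]
      rw [Finsupp.tsub_apply, Finsupp.single_apply]
      by_cases hij : i = j
      · subst hij; simp
      · have hij' : (i : ℕ) ≠ (j : ℕ) := fun h => hij (Fin.ext h)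
        simp [hij', Ne.symm hij, hij]
    rw [hprodz]
    congr 1
    rw [haa]
    simp only [dif_pos j.2, Fin.eta]
  set P' : Fin n → Fin n → MvPowerSeries (Fin n) k := fun i j =>
    ∑ α ∈ D, (α j) • (MvPowerSeries.coeff (R := k) α (f i) •
      MvPowerSeries.monomial (R := k) (α - Finsupp.single j 1) 1) with hP'
  have hμM : ∀ i j, μ (M i j) = qa (P' i j) := by
    intro i j
    rw [hM, Matrix.of_apply, map_sum, hP', map_sum]
    apply Finset.sum_congr rfl
    intro α _
    rw [map_smul, hμbez, map_nsmul, map_smul, smul_comm]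
  have hP'eq : ∀ i j, qa (psDeriv j (f i)) = qa (P' i j) := by
    intro i j
    have hco : ∀ m : Fin n →₀ ℕ, (∀ i', m i' < d - 1) →
        MvPowerSeries.coeff (R := k) m (psDeriv j (f i) - P' i j) = 0 := by
      intro m hm
      rw [map_sub, hP', map_sum]
      have hmem' : m + Finsupp.single j 1 ∈ D := by
        apply hmemD
        intro i'
        rw [Finsupp.add_apply, Finsupp.single_apply]
        have := hm i'
        by_cases h : j = i' <;> simp [h] <;> omega
      have hsum : ∑ α ∈ D, MvPowerSeries.coeff (R := k) m ((α j) • (MvPowerSeries.coeff (R := k) α (f i) •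
            MvPowerSeries.monomial (R := k) (α - Finsupp.single j 1) 1))
          = (m j + 1) • MvPowerSeries.coeff (R := k) (m + Finsupp.single j 1) (f i) := by
        rw [Finset.sum_eq_single (m + Finsupp.single j 1)]
        · rw [map_nsmul, map_smul, MvPowerSeries.coeff_monomial]
          have h2 : (m + Finsupp.single j 1) - Finsupp.single j 1 = m := by
            ext i'
            simp only [Finsupp.tsub_apply, Finsupp.add_apply, Finsupp.single_apply]
            split <;> omega
          have h1 : ((m + Finsupp.single j 1 : Fin n →₀ ℕ)) j = m j + 1 := by simp
          rw [h2, if_pos rfl, h1, smul_eq_mul, mul_one]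
        · intro α hα hne
          by_cases hz : α j = 0
          · rw [hz, zero_smul, map_zero]
          · rw [map_nsmul, map_smul, MvPowerSeries.coeff_monomial, if_neg, smul_zero, smul_zero]
            intro heq
            apply hne
            have hle : Finsupp.single j 1 ≤ α :=
              Finsupp.single_le_iff.mpr (Nat.one_le_iff_ne_zero.mpr hz)
            rw [heq, tsub_add_cancel_of_le hle]
        · intro hnotin
          exact absurd hmem' hnotin
      rw [hsum]
      have hps : MvPowerSeries.coeff (R := k) m (psDeriv j (f i))
          = ((m j + 1 : ℕ) : k) * MvPowerSeries.coeff (R := k) (m + Finsupp.single j 1) (f i) := rfl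
      rw [hps, nsmul_eq_mul, sub_self]
    have hmem := mem_pow_span_X _ hco
    have hmem2 : psDeriv j (f i) - P' i j
        ∈ (Ideal.span (Set.range (MvPowerSeries.X : Fin n → MvPowerSeries (Fin n) k))) ^ N :=
      Ideal.pow_le_pow_right (by omega) hmem
    have h0 : qa (psDeriv j (f i) - P' i j) = 0 := hker _ hmem2
    rw [map_sub, sub_eq_zero] at h0
    exact h0
  -- the Jacobian class is μ Δ
  have hjac : qa (jacobianPS f) = μ Δ := by
    have h1 : μ Δ = (M.map μ).det := by
      rw [hΔdef]
      exact RingHom.map_det μ.toRingHom M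
    have h2 : qa (jacobianPS f) = ((Matrix.of fun i j => psDeriv j (f i)).map qa).det := by
      rw [jacobianPS]
      exact RingHom.map_det qa.toRingHom _
    rw [h1, h2]
    congr 1
    ext i j
    rw [Matrix.map_apply, Matrix.map_apply, Matrix.of_apply, hP'eq i j, ← hμM i j]
  -- final assembly
  have hgnil : IsNilpotent (qa g) := by
    refine ⟨N, ?_⟩
    rw [← map_pow]
    exact hker _ (Ideal.pow_mem_pow hg N)
  have htr := trace_socle Δ hZ hgnil
  rw [map_mul, hjac, mul_comm]
  rw [← hμ] at htr
  exact htr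

/-- If `k` has characteristic zero, the ideal `I = (f_1,…,f_n)` is proper and
`k[[X_1,…,X_n]]/I` is a finite dimensional `k`-vector space, then
`J_X(f_1,…,f_n)·(X_1,…,X_n) ⊆ I`, i.e. the class of the Jacobian lies in the socle of
the Artinian algebra `k[[X]]/I`. -/
theorem stmt1 {k : Type} [Field k] [CharZero k] {n : ℕ}
    (f : Fin n → MvPowerSeries (Fin n) k)
    (hI : Ideal.span (Set.range f) ≠ ⊤)
    (hfin : FiniteDimensional k
      (MvPowerSeries (Fin n) k ⧸ Ideal.span (Set.range f))) :
    ∀ g ∈ Ideal.span (Set.range (MvPowerSeries.X : Fin n → MvPowerSeries (Fin n) k)),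
      jacobianPS f * g ∈ Ideal.span (Set.range f) := by
  intro g hg
  obtain ⟨N, hN1, hker⟩ := span_X_pow_le_ker f hI hfin
  have h := core (Ideal.Quotient.mkₐ k (Ideal.span (Set.range f)))
    (Ideal.Quotient.mkₐ_surjective k _) f N hN1 hker
    (fun i => by
      rw [Ideal.Quotient.mkₐ_eq_mk, Ideal.Quotient.eq_zero_iff_mem]
      exact Ideal.subset_span (Set.mem_range_self i))
    g hg
  rw [Ideal.Quotient.mkₐ_eq_mk, Ideal.Quotient.eq_zero_iff_mem] at h
  exact h


end Assembly
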